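/- Let V be a finite-dimensional real vector space with inner product g, J : V → V a linear map with J² = −id which is an isometry for g, and define ω(u,v) = g(Ju, v). Suppose W ⊆ V is a subspace and U ⊆ W is a subspace with U = W^⊥ω ∩ W (the ω-orthogonal of W inside W). If V = J(U) ⊕ W (direct sum) and J(U) is g-orthogonal to W, then the g-orthogonal complement of U inside W, call it W^hor, satisfies: ω restricted to W^hor is nondegenerate. -/

import Mathlib

open scoped RealInnerProductSpace

/-- Linear-algebra model of the splitting `T_mM = J(t⁰) ⊕ T_mM^G_O`: let `V` be a
finite-dimensional real inner product space, `J` a compatible complex structure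
(`J² = −id`, `J` an isometry), and `ω(u,v) = ⟪Ju, v⟫` the associated symplectic form.
Let `W` be a coisotropic subspace with characteristic subspace
`U = {w ∈ W : ω(w,w') = 0 ∀ w' ∈ W}`, and assume `V = J(U) ⊕ W` with `J(U) ⊥ W`.
Then `ω` restricted to `W^hor` (the `g`-orthogonal complement of `U` inside `W`)
is nondegenerate. -/
theorem stmt16 (V : Type*) [NormedAddCommGroup V] [InnerProductSpace ℝ V]
    [FiniteDimensional ℝ V]
    (J : V →ₗ[ℝ] V) (hJ2 : ∀ v : V, J (J v) = -v)
    (hJiso : ∀ u v : V, ⟪J u, J v⟫ = ⟪u, v⟫)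
    (ω : V → V → ℝ) (hω : ∀ u v : V, ω u v = ⟪J u, v⟫)
    (W U : Submodule ℝ V)
    (hU : ∀ u : V, u ∈ U ↔ (u ∈ W ∧ ∀ w' ∈ W, ω u w' = 0))
    (hcompl : IsCompl (U.map J) W)
    (horth : ∀ u ∈ U, ∀ w ∈ W, ⟪J u, w⟫ = 0) :
    ∀ x ∈ Uᗮ ⊓ W, x ≠ 0 → ∃ y ∈ Uᗮ ⊓ W, ω x y ≠ 0 := by
  intro x hx hx0
  by_contra h
  push_neg at h
  have hUW : U ≤ W := fun u hu => ((hU u).mp hu).1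
  have hxU : x ∈ U := by
    rw [hU]
    refine ⟨hx.2, fun w hw => ?_⟩
    set u : V := (U.orthogonalProjection w : V) with hudef
    have hu : u ∈ U := (U.orthogonalProjection w).2
    have hhin : w - u ∈ Uᗮ ⊓ W :=
      ⟨U.sub_starProjection_mem_orthogonal w, W.sub_mem hw (hUW hu)⟩
    have hJxu : ⟪J x, u⟫ = 0 := by
      have h1 := hJiso (J x) u
      rw [hJ2, inner_neg_left] at h1
      have h2 := horth u hu x hx.2
      rw [real_inner_comm] at h2
      rw [← h1, h2, neg_zero]
    have hωh : ω x (w - u) = 0 := h _ hhin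
    rw [hω] at hωh ⊢
    have : w = u + (w - u) := by abel
    rw [this, inner_add_right, hJxu, hωh, add_zero]
  have : ⟪x, x⟫ = 0 := hx.1 x hxU
  exact hx0 (inner_self_eq_zero.mp this)
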